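/- Let A be a closed subalgebra of C(X) for X compact Hausdorff, separating points and containing constants, and let H be a closed subset of X. Then the restriction algebra A↾H = {f↾H : f ∈ A} is closed in C(H) if and only if there is a finite constant c ≥ 1 such that for all f ∈ A there is f* ∈ A with f↾H = f*↾H and ‖f*‖ ≤ c·‖f‖_H, where ‖f‖_H = sup{|f(x)| : x ∈ H}. -/

import Mathlib

open Set

/-- The restriction algebra `A↾H = {f↾H : f ∈ A}`, as a set of continuous functions on `H`. -/
def restrictSet {X : Type*} [TopologicalSpace X] (A : Subalgebra ℂ C(X, ℂ)) (H : Set X) :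
    Set C(H, ℂ) :=
  {g | ∃ f ∈ A, f.restrict H = g}

/-- `‖f‖_H = sup {|f x| : x ∈ H}`. -/
noncomputable def supNormOn {X : Type*} [TopologicalSpace X] (f : C(X, ℂ)) (H : Set X) : ℝ :=
  sSup ((fun x => ‖f x‖) '' H)

lemma supNormOn_eq_norm_restrict {X : Type*} [TopologicalSpace X] (H : Set X)
    [CompactSpace H] (f : C(X, ℂ)) : supNormOn f H = ‖f.restrict H‖ := by
  rw [ContinuousMap.norm_eq_iSup_norm, supNormOn, Set.image_eq_range, iSup]
  rfl

lemma norm_restrict_le' {X : Type*} [TopologicalSpace X] [CompactSpace X] (H : Set X)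
    [CompactSpace H] (f : C(X, ℂ)) : ‖f.restrict H‖ ≤ ‖f‖ :=
  (ContinuousMap.norm_le _ (norm_nonneg f)).2 fun x => f.norm_coe_le_norm x

set_option maxHeartbeats 1000000 in
set_option synthInstance.maxHeartbeats 400000 in
/-- For a closed subalgebra `A ≤ C(X, ℂ)` and a closed `H ⊆ X`, the restriction `A↾H` is
closed in `C(H, ℂ)` iff there is a constant `c ≥ 1` such that every `f ∈ A` admits
`f* ∈ A` with `f↾H = f*↾H` and `‖f*‖ ≤ c ‖f‖_H`. -/
theorem stmt2 {X : Type*} [TopologicalSpace X] [CompactSpace X] [T2Space X]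
    (A : Subalgebra ℂ C(X, ℂ)) (hA : A.SeparatesPoints)
    (hAcl : IsClosed (A : Set C(X, ℂ)))
    (H : Set X) (hH : IsClosed H) :
    IsClosed (restrictSet A H) ↔
      ∃ c : ℝ, 1 ≤ c ∧ ∀ f ∈ A, ∃ fs ∈ A,
        f.restrict H = fs.restrict H ∧ ‖fs‖ ≤ c * supNormOn f H := by
  haveI : CompactSpace H := isCompact_iff_compactSpace.mp hH.isCompact
  haveI : CompleteSpace A := hAcl.completeSpace_coe
  constructor
  · -- closed range ⇒ controlled lifts, via the open mapping theorem
    intro hclosed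
    -- the range as a submodule
    let R : Submodule ℂ C(H, ℂ) :=
      { carrier := restrictSet A H
        add_mem' := by
          rintro _ _ ⟨f, hf, rfl⟩ ⟨g, hg, rfl⟩
          exact ⟨f + g, add_mem hf hg, by ext x; rfl⟩
        zero_mem' := ⟨0, zero_mem A, by ext x; rfl⟩
        smul_mem' := by
          rintro c _ ⟨f, hf, rfl⟩
          exact ⟨c • f, SMulMemClass.smul_mem c hf, by ext x; rfl⟩ }
    haveI : CompleteSpace R := (hclosed : IsClosed (R : Set C(H, ℂ))).completeSpace_coe
    -- the restriction map as a continuous linear map onto `R`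
    let L₀ : A →ₗ[ℂ] R :=
      { toFun := fun f => ⟨(f : C(X, ℂ)).restrict H, ⟨(f : C(X, ℂ)), f.2, rfl⟩⟩
        map_add' := fun f g => by ext x; rfl
        map_smul' := fun c f => by ext x; rfl }
    let L : A →L[ℂ] R := LinearMap.mkContinuous L₀ 1 fun f => by
      rw [one_mul]; exact norm_restrict_le' H (f : C(X, ℂ))
    have hsurj : Function.Surjective L := by
      rintro ⟨g, hg⟩
      obtain ⟨f, hf, hfg⟩ := hg
      exact ⟨⟨f, hf⟩, Subtype.ext hfg⟩
    obtain ⟨C, hC0, hC⟩ := L.exists_preimage_norm_le hsurj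
    refine ⟨max C 1, le_max_right _ _, fun f hf => ?_⟩
    obtain ⟨x, hx, hxn⟩ := hC (L ⟨f, hf⟩)
    refine ⟨(x : C(X, ℂ)), x.2, ?_, ?_⟩
    · exact (congrArg Subtype.val hx).symm
    · have h1 : ‖(L ⟨f, hf⟩ : R)‖ = supNormOn f H := by
        rw [supNormOn_eq_norm_restrict]; rfl
      have h2 : (0:ℝ) ≤ ‖(L ⟨f, hf⟩ : R)‖ := norm_nonneg _
      calc ‖(x : C(X, ℂ))‖ = ‖x‖ := rfl
        _ ≤ C * ‖(L ⟨f, hf⟩ : R)‖ := hxn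
        _ ≤ max C 1 * ‖(L ⟨f, hf⟩ : R)‖ := by
            exact mul_le_mul_of_nonneg_right (le_max_left _ _) h2
        _ = max C 1 * supNormOn f H := by rw [h1]
  · -- controlled lifts ⇒ closed range, via `controlled_closure_of_complete`
    rintro ⟨c, hc1, hcond⟩
    let K : AddSubgroup C(H, ℂ) :=
      { carrier := restrictSet A H
        add_mem' := by
          rintro _ _ ⟨f, hf, rfl⟩ ⟨g, hg, rfl⟩
          exact ⟨f + g, add_mem hf hg, by ext x; rfl⟩
        zero_mem' := ⟨0, zero_mem A, by ext x; rfl⟩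
        neg_mem' := by
          rintro _ ⟨f, hf, rfl⟩
          exact ⟨-f, neg_mem hf, by ext x; rfl⟩ }
    let T : NormedAddGroupHom A C(H, ℂ) :=
      { toFun := fun f => (f : C(X, ℂ)).restrict H
        map_add' := fun f g => by ext x; rfl
        bound' := ⟨1, fun f => by rw [one_mul]; exact norm_restrict_le' H (f : C(X, ℂ))⟩ }
    have hyp : T.SurjectiveOnWith K c := by
      rintro _ ⟨f, hf, rfl⟩
      obtain ⟨fs, hfsA, hres, hnorm⟩ := hcond f hf
      refine ⟨⟨fs, hfsA⟩, ?_, ?_⟩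
      · show fs.restrict H = f.restrict H
        exact hres.symm
      · show ‖fs‖ ≤ c * ‖f.restrict H‖
        rwa [← supNormOn_eq_norm_restrict]
    have hcl := controlled_closure_of_complete (lt_of_lt_of_le zero_lt_one hc1)
      (zero_lt_one (α := ℝ)) hyp
    have hsub : closure (restrictSet A H) ⊆ restrictSet A H := by
      intro g hg
      have hg' : g ∈ K.topologicalClosure := hg
      obtain ⟨x, hx, -⟩ := hcl g hg'
      exact ⟨(x : C(X, ℂ)), x.2, hx⟩
    exact isClosed_of_closure_subset hsub
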